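/- Let (𝒳, ρ) be a length space and η : 𝒳 → 𝒴 a labeling function. For every r > 0, the complement of V_r = {x ∈ 𝒳 : margin_η(x) ≥ r} equals the r-expansion ∂_η𝒳^r of the boundary: 𝒳 ∖ V_r = ∪_{z ∈ ∂_η𝒳} B(z, r). -/
import Mathlib


open MeasureTheory Filter Set Metric
open scoped ENNReal NNReal

noncomputable section

/-- The margin of a point: distance to the nearest differently-labeled point (`⊤` if none). -/
def margin {α 𝒴 : Type*} [PseudoMetricSpace α] (η : α → 𝒴) (x : α) : ℝ≥0∞ :=
  ⨅ (x' : α) (_ : η x' ≠ η x), edist x x'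

/-- The boundary of a labeling function: the set of points with zero margin. -/
def labelBoundary {α 𝒴 : Type*} [PseudoMetricSpace α] (η : α → 𝒴) : Set α :=
  {x | margin η x = 0}

/-- A set is mutually-labeling for `η` if its diameter is smaller than the margin of
each of its points. -/
def MutuallyLabeling {α 𝒴 : Type*} [PseudoMetricSpace α] (η : α → 𝒴) (U : Set α) : Prop :=
  ∀ x ∈ U, EMetric.diam U < margin η x

/-- `Xt` is a nearest-neighbor process for the sequence `X` (indices start at 1):
for every `n ≥ 2`, `Xt n` is one of `X 1, …, X (n-1)` realizing the minimal distance
to `X n`. -/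
def IsNNProcess {α : Type*} [PseudoMetricSpace α] (X Xt : ℕ → α) : Prop :=
  ∀ n, 2 ≤ n → (∃ m, 1 ≤ m ∧ m < n ∧ Xt n = X m) ∧
    ∀ m, 1 ≤ m → m < n → dist (X n) (Xt n) ≤ dist (X n) (X m)

/-- The natural filtration of the process `X`: at time `n` it is `σ(X 1, …, X n)`. -/
def natFilt {Ω α : Type*} [MeasurableSpace α] (X : ℕ → Ω → α) (n : ℕ) : MeasurableSpace Ω :=
  ⨆ m ∈ Set.Icc 1 n, MeasurableSpace.comap (X m) inferInstance

/-- `X` is uniformly dominated by `ν` at rate `ε` (uniform absolute continuity):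
for every `δ > 0` and every measurable `A` with `ν A < δ`, almost surely
`P(X n ∈ A | 𝓕 (n-1)) < ε δ` for every `n ≥ 1`. -/
def UniformlyDominatedAtRate {Ω α : Type*} [MeasurableSpace Ω] [MeasurableSpace α]
    (P : Measure Ω) (X : ℕ → Ω → α) (ν : Measure α) (ε : ℝ → ℝ) : Prop :=
  ∀ δ : ℝ, 0 < δ → ∀ A : Set α, MeasurableSet A → ν A < ENNReal.ofReal δ →
    ∀ᵐ ω ∂P, ∀ n, 1 ≤ n →
      (P[fun ω' => A.indicator (fun _ => (1 : ℝ)) (X n ω') | natFilt X (n - 1)]) ω < ε δ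

/-- `X` is uniformly dominated by `ν`. -/
def UniformlyDominated {Ω α : Type*} [MeasurableSpace Ω] [MeasurableSpace α]
    (P : Measure Ω) (X : ℕ → Ω → α) (ν : Measure α) : Prop :=
  ∀ ε : ℝ, 0 < ε → ∃ δ : ℝ, 0 < δ ∧ ∀ A : Set α, MeasurableSet A → ν A < ENNReal.ofReal δ →
    ∀ᵐ ω ∂P, ∀ n, 1 ≤ n →
      (P[fun ω' => A.indicator (fun _ => (1 : ℝ)) (X n ω') | natFilt X (n - 1)]) ω < ε

/-- `X` is ergodically dominated by `ν` (ergodic continuity). -/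
def ErgodicallyDominated {Ω α : Type*} [MeasurableSpace Ω] [MeasurableSpace α]
    (P : Measure Ω) (X : ℕ → Ω → α) (ν : Measure α) : Prop :=
  ∀ ε : ℝ, 0 < ε → ∃ δ : ℝ, 0 < δ ∧ ∀ A : Set α, MeasurableSet A → ν A < ENNReal.ofReal δ →
    ∀ᵐ ω ∂P, Filter.limsup (fun N : ℕ =>
      (∑ n ∈ Finset.Icc 1 N, A.indicator (fun _ => (1 : ℝ)) (X n ω)) / N) atTop < ε

/-- `X` is a `σ`-smoothed process with respect to `ν`. -/
def Smoothed {Ω α : Type*} [MeasurableSpace Ω] [MeasurableSpace α]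
    (P : Measure Ω) (X : ℕ → Ω → α) (ν : Measure α) (σ : ℝ) : Prop :=
  ∀ A : Set α, MeasurableSet A →
    ∀ᵐ ω ∂P, ∀ n, 1 ≤ n →
      (P[fun ω' => A.indicator (fun _ => (1 : ℝ)) (X n ω') | natFilt X (n - 1)]) ω ≤
        σ⁻¹ * (ν A).toReal

/-- `α` is a `d`-doubling metric space: every ball can be covered by `2 ^ d` balls of
half the radius. -/
def DoublingWith (α : Type*) [PseudoMetricSpace α] (d : ℕ) : Prop :=
  ∀ (x : α) (r : ℝ), ∃ t : Finset α, t.card ≤ 2 ^ d ∧ ball x r ⊆ ⋃ y ∈ t, ball y (r / 2)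

/-- `(α, ν)` is upper doubling with parameters `(c, d)`. -/
def UpperDoubling (α : Type*) [PseudoMetricSpace α] [MeasurableSpace α]
    (ν : Measure α) (c : ℝ) (d : ℕ) : Prop :=
  DoublingWith α d ∧ ∀ (x : α) (r : ℝ), 0 < r → ν (ball x r) ≤ ENNReal.ofReal (c * r ^ d)

/-- The `r`-packing number of a set `U`. -/
def packingNumber {α : Type*} [PseudoMetricSpace α] (r : ℝ) (U : Set α) : ℕ∞ :=
  ⨆ (Z : Finset α) (_ : ↑Z ⊆ U ∧ ∀ z ∈ Z, ∀ z' ∈ Z, z ≠ z' → r ≤ dist z z'), (Z.card : ℕ∞)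

/-- The `r`-covering number of a set `A`. -/
def coveringNumber {α : Type*} [PseudoMetricSpace α] (r : ℝ) (A : Set α) : ℕ∞ :=
  ⨅ (t : Finset α) (_ : A ⊆ ⋃ y ∈ t, ball y r), (t.card : ℕ∞)

/-- The upper box-counting dimension of a set. -/
def boxDim {α : Type*} [PseudoMetricSpace α] (A : Set α) : ℝ :=
  Filter.limsup (fun r : ℝ => Real.log ((coveringNumber r A).toNat : ℝ) / Real.log (1 / r))
    (nhdsWithin 0 (Set.Ioi 0))

/-- The mutually-labeling covering number of `V` for `η`. -/
def mlCoveringNumber {α 𝒴 : Type*} [PseudoMetricSpace α] (η : α → 𝒴) (V : Set α) : ℕ∞ :=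
  ⨅ (𝒰 : Finset (Set α)) (_ : (∀ U ∈ 𝒰, MutuallyLabeling η U) ∧ V ⊆ ⋃ U ∈ 𝒰, U),
    (𝒰.card : ℕ∞)

/-- The `r`-expansion of a set. -/
def expansion {α : Type*} [PseudoMetricSpace α] (A : Set α) (r : ℝ) : Set α :=
  ⋃ x ∈ A, ball x r

/-- The upper Minkowski content of `A` with respect to `ν`. -/
def minkowskiContent {α : Type*} [PseudoMetricSpace α] [MeasurableSpace α]
    (ν : Measure α) (A : Set α) : ℝ≥0∞ :=
  Filter.limsup (fun r : ℝ => (ν (expansion A r) - ν A) / ENNReal.ofReal r)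
    (nhdsWithin 0 (Set.Ioi 0))

/-- A length space: the distance between two points is the infimum of lengths of
continuous paths joining them. -/
def IsLengthSpace (α : Type*) [PseudoMetricSpace α] : Prop :=
  ∀ x y : α, edist x y =
    ⨅ (γ : ℝ → α) (_ : ContinuousOn γ (Set.Icc 0 1)) (_ : γ 0 = x) (_ : γ 1 = y),
      eVariationOn γ (Set.Icc 0 1)

/-- The ball associated to a (center, dyadic level) pair: radius `2 ^ (-level)`. -/
def ballOf {α : Type*} [PseudoMetricSpace α] (p : α × ℕ) : Set α :=
  ball p.1 ((2 : ℝ) ^ (-(p.2 : ℤ)))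

/-- The insertion rank of a new point `x` relative to an existing cover tree `C`:
the least `ℓ ≥ 1` such that no ball of radius `2 ^ (-ℓ)` in `C` contains `x`. -/
def nextRank {α : Type*} [PseudoMetricSpace α] (C : Set (α × ℕ)) (x : α) : ℕ :=
  sInf {ℓ : ℕ | 1 ≤ ℓ ∧ ∀ q ∈ C, q.2 = ℓ → x ∉ ballOf q}

/-- Sequentially constructed cover trees for the points `a 1, a 2, …`; a cover tree is
recorded as the set of its (center, dyadic level) pairs. -/
def coverTree {α : Type*} [PseudoMetricSpace α] (a : ℕ → α) : ℕ → Set (α × ℕ)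
  | 0 => ∅
  | 1 => {p | p.1 = a 1}
  | (k + 2) => coverTree a (k + 1) ∪
      {p | p.1 = a (k + 2) ∧ nextRank (coverTree a (k + 1)) (a (k + 2)) ≤ p.2}

/-- The insertion ranks of the sequentially constructed cover trees. -/
def insertionRank {α : Type*} [PseudoMetricSpace α] (a : ℕ → α) : ℕ → ℕ
  | 0 => 0
  | 1 => 0
  | (k + 2) => nextRank (coverTree a (k + 1)) (a (k + 2))

/-- In a length space, the complement of the `r`-margin set is the
`r`-expansion of the boundary. -/
theorem compl_margin_set_eq_expansion_boundary
    {α 𝒴 : Type*} [MetricSpace α] (hl : IsLengthSpace α) (η : α → 𝒴)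
    (r : ℝ) (hr : 0 < r) :
    {x : α | ENNReal.ofReal r ≤ margin η x}ᶜ = expansion (labelBoundary η) r := by
  ext x
  simp only [Set.mem_compl_iff, Set.mem_setOf_eq, not_le, expansion, Set.mem_iUnion,
    Metric.mem_ball, labelBoundary]
  constructor
  · intro hx
    rw [margin] at hx
    obtain ⟨x', hx'⟩ := iInf_lt_iff.mp hx
    obtain ⟨hne, hdist⟩ := iInf_lt_iff.mp hx'
    rw [hl x x'] at hdist
    obtain ⟨γ, hγ⟩ := iInf_lt_iff.mp hdist
    obtain ⟨hcont, h1⟩ := iInf_lt_iff.mp hγ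
    obtain ⟨hγ0, h2⟩ := iInf_lt_iff.mp h1
    obtain ⟨hγ1, hvar⟩ := iInf_lt_iff.mp h2
    set T : Set ℝ := {t | t ∈ Set.Icc (0:ℝ) 1 ∧ η (γ t) = η x} with hT
    have h0T : (0:ℝ) ∈ T := ⟨⟨le_refl 0, zero_le_one⟩, by rw [hγ0]⟩
    have hTsub : T ⊆ Set.Icc (0:ℝ) 1 := fun t ht => ht.1
    have hbdd : BddAbove T := ⟨1, fun t ht => ht.1.2⟩
    set t₀ : ℝ := sSup T with ht₀
    have ht₀0 : 0 ≤ t₀ := le_csSup hbdd h0T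
    have ht₀1 : t₀ ≤ 1 := csSup_le ⟨0, h0T⟩ fun t ht => ht.1.2
    have ht₀mem : t₀ ∈ Set.Icc (0:ℝ) 1 := ⟨ht₀0, ht₀1⟩
    set z : α := γ t₀ with hz
    have hdxz : edist x z ≤ eVariationOn γ (Set.Icc 0 1) := by
      rw [← hγ0]
      exact eVariationOn.edist_le γ (Set.left_mem_Icc.mpr zero_le_one) ht₀mem
    have hdxz' : dist x z < r := by
      have := lt_of_le_of_lt hdxz hvar
      rwa [edist_dist, ENNReal.ofReal_lt_ofReal_iff hr] at this
    have hcw : ContinuousWithinAt γ (Set.Icc 0 1) t₀ := hcont t₀ ht₀mem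
    have key : ∀ ε : ℝ, 0 < ε → ∃ w, η w ≠ η z ∧ dist z w < ε := by
      intro ε hε
      obtain ⟨δ, hδ, hδd⟩ := Metric.continuousWithinAt_iff.mp hcw ε hε
      by_cases hcase : η z = η x
      · have ht₀lt1 : t₀ < 1 := by
          rcases lt_or_eq_of_le ht₀1 with h | h
          · exact h
          · exfalso
            apply hne
            rw [← hγ1, ← h]
            exact hcase
        set t : ℝ := min (t₀ + δ / 2) 1 with htdef
        have htgt : t₀ < t := lt_min (by linarith) ht₀lt1
        have htmem : t ∈ Set.Icc (0:ℝ) 1 :=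
          ⟨le_trans ht₀0 (le_of_lt htgt), min_le_right _ _⟩
        have htdist : dist t t₀ < δ := by
          rw [Real.dist_eq, abs_of_pos (by linarith)]
          have : t ≤ t₀ + δ / 2 := min_le_left _ _
          linarith
        have htnT : t ∉ T := fun h => absurd (le_csSup hbdd h) (not_le.mpr htgt)
        have hlab : η (γ t) ≠ η x := fun h => htnT ⟨htmem, h⟩
        refine ⟨γ t, fun h => hlab (h.trans hcase), ?_⟩
        · rw [dist_comm]
          exact hδd htmem htdist
      · obtain ⟨t, htT, htlt⟩ := exists_lt_of_lt_csSup ⟨0, h0T⟩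
          (show t₀ - δ < t₀ by linarith)
        have htle : t ≤ t₀ := le_csSup hbdd htT
        have htdist : dist t t₀ < δ := by
          rw [Real.dist_eq, abs_of_nonpos (by linarith)]
          linarith
        refine ⟨γ t, ?_, ?_⟩
        · rw [htT.2]
          exact fun h => hcase h.symm
        · rw [dist_comm]
          exact hδd htT.1 htdist
    have hz0 : margin η z = 0 := by
      by_contra h
      have hpos : 0 < margin η z := pos_iff_ne_zero.mpr h
      obtain ⟨ε, hε0, hεlt, hεlt'⟩ := ENNReal.lt_iff_exists_real_btwn.mp hpos
      have hεpos : 0 < ε := ENNReal.ofReal_pos.mp hεlt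
      obtain ⟨w, hw, hdw⟩ := key ε hεpos
      have : margin η z ≤ edist z w :=
        iInf_le_of_le w (iInf_le _ hw)
      rw [edist_dist] at this
      exact absurd (lt_of_le_of_lt this
        (lt_of_le_of_lt (ENNReal.ofReal_le_ofReal hdw.le) hεlt')) (lt_irrefl _)
    exact ⟨z, hz0, hdxz'⟩
  · rintro ⟨z, hz0, hdxz⟩
    set c : ℝ := (r - dist x z) / 2 with hc
    have hcpos : 0 < c := by
      have := hdxz
      simp only [hc]
      linarith
    have hzlt : margin η z < ENNReal.ofReal c := by
      rw [hz0]
      exact ENNReal.ofReal_pos.mpr hcpos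
    rw [margin] at hzlt
    obtain ⟨x', hx'⟩ := iInf_lt_iff.mp hzlt
    obtain ⟨hne, hdx'⟩ := iInf_lt_iff.mp hx'
    by_cases h : η x' = η x
    · have hzx : η z ≠ η x := fun hh => hne (h.trans hh.symm)
      calc margin η x ≤ edist x z := iInf_le_of_le z (iInf_le _ hzx)
        _ < ENNReal.ofReal r := by
            rw [edist_dist]
            exact (ENNReal.ofReal_lt_ofReal_iff hr).mpr hdxz
    · calc margin η x ≤ edist x x' := iInf_le_of_le x' (iInf_le _ h)
        _ ≤ edist x z + edist z x' := edist_triangle _ _ _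
        _ < ENNReal.ofReal (dist x z) + ENNReal.ofReal c := by
            rw [edist_dist]
            exact ENNReal.add_lt_add_left ENNReal.ofReal_ne_top hdx'
        _ ≤ ENNReal.ofReal (dist x z + c) :=
            (ENNReal.ofReal_add dist_nonneg hcpos.le).symm.le
        _ < ENNReal.ofReal r := by
            apply (ENNReal.ofReal_lt_ofReal_iff hr).mpr
            simp only [hc]
            linarith
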